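/- Let δ ∈ (0,1), let r be a positive integer, and let M be an n×n binary matrix. If M has a (δ²/16, r)-row-clustering 𝓡 = {R₀, R₁, …, R_r} and a (δ²/16, r)-column-clustering 𝓒 = {C₀, C₁, …, C_r}, then the pair (𝓡, 𝓒), viewed as partitions of the rows and of the columns into r+1 parts each, is a (δ, r+1)-partition of M; that is, the total number of entries of M lying in blocks Rᵢ×Cⱼ that are not δ-homogeneous is at most δ·n². -/

import Mathlib

open Finset

/-- `(r, c)` is a copy of the `s × t` matrix `A` inside the `m × n` matrix `M`. -/
def IsCopy {Γ : Type*} {s t m n : ℕ} (A : Fin s → Fin t → Γ) (M : Fin m → Fin n → Γ)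
    (r : Fin s → Fin m) (c : Fin t → Fin n) : Prop :=
  StrictMono r ∧ StrictMono c ∧ ∀ i j, M (r i) (c j) = A i j

/-- The number of copies of `A` in `M`. -/
noncomputable def copyCount {Γ : Type*} {s t m n : ℕ} (A : Fin s → Fin t → Γ)
    (M : Fin m → Fin n → Γ) : ℕ :=
  Set.ncard {p : (Fin s → Fin m) × (Fin t → Fin n) | IsCopy A M p.1 p.2}

/-- A `(δ, r)`-row-clustering of the `n × n` binary matrix `M`, given by a labelling `g`
of the rows by `r + 1` clusters: cluster `0` (the error cluster) has at most `δ·n` rows,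
and any two rows in the same cluster `a ≠ 0` differ in at most `δ·n` entries. -/
def IsRowClustering {n r : ℕ} (M : Fin n → Fin n → Bool) (δ : ℝ)
    (g : Fin n → Fin (r + 1)) : Prop :=
  ((univ.filter fun i : Fin n => g i = 0).card : ℝ) ≤ δ * n ∧
  ∀ a : Fin (r + 1), a ≠ 0 → ∀ i i' : Fin n, g i = a → g i' = a →
    ((univ.filter fun j : Fin n => M i j ≠ M i' j).card : ℝ) ≤ δ * n

/-- A `(δ, r)`-column-clustering of `M`: a row-clustering of its transpose. -/
def IsColClustering {n r : ℕ} (M : Fin n → Fin n → Bool) (δ : ℝ)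
    (g : Fin n → Fin (r + 1)) : Prop :=
  IsRowClustering (fun i j => M j i) δ g

/-- The block of `M` consisting of the rows labelled `a` by `g` and the columns labelled
`b` by `h` is `δ`-homogeneous: some value `v ∈ {0,1}` occupies at least a `(1-δ)`-fraction
of its entries. -/
def BlockHomog {n r : ℕ} (M : Fin n → Fin n → Bool) (δ : ℝ)
    (g h : Fin n → Fin (r + 1)) (a b : Fin (r + 1)) : Prop :=
  ∃ v : Bool,
    (1 - δ) * (((univ.filter fun i : Fin n => g i = a).card : ℝ) *
        ((univ.filter fun j : Fin n => h j = b).card : ℝ)) ≤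
      ((univ.filter fun p : Fin n × Fin n =>
          g p.1 = a ∧ h p.2 = b ∧ M p.1 p.2 = v).card : ℝ)

namespace ClusterProofAux

variable {n r : ℕ}

/-- The set of rows labelled `a` by `g` (also used for columns). -/
def Rs (g : Fin n → Fin (r + 1)) (a : Fin (r + 1)) : Finset (Fin n) :=
  univ.filter fun i => g i = a

/-- Rows in cluster `a` where columns `j` and `j'` disagree. -/
def DC (M : Fin n → Fin n → Bool) (g : Fin n → Fin (r + 1)) (a : Fin (r + 1))
    (j j' : Fin n) : Finset (Fin n) :=
  univ.filter fun i => g i = a ∧ M i j ≠ M i j'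

/-- Columns in cluster `b` where rows `i` and `i'` disagree. -/
def DR (M : Fin n → Fin n → Bool) (h : Fin n → Fin (r + 1)) (b : Fin (r + 1))
    (i i' : Fin n) : Finset (Fin n) :=
  univ.filter fun j => h j = b ∧ M i j ≠ M i' j

/-- Entries of the `(a, b)` block with value `v`. -/
def Bv (M : Fin n → Fin n → Bool) (g h : Fin n → Fin (r + 1)) (a b : Fin (r + 1))
    (v : Bool) : Finset (Fin n × Fin n) :=
  univ.filter fun p => g p.1 = a ∧ h p.2 = b ∧ M p.1 p.2 = v

lemma sum_card_filter_eq (f : Fin n → Fin (r + 1)) (P : Fin n → Prop) [DecidablePred P] :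
    ∑ a : Fin (r + 1), (univ.filter fun x => f x = a ∧ P x).card = (univ.filter P).card := by
  rw [Finset.card_eq_sum_card_fiberwise (f := f) (t := univ) (fun x _ => mem_univ _)]
  refine sum_congr rfl fun a _ => ?_
  rw [filter_filter]
  exact congrArg card (filter_congr fun x _ => by tauto)

lemma sum_card_fiber (f : Fin n → Fin (r + 1)) :
    ∑ a : Fin (r + 1), (univ.filter fun x => f x = a).card = n := by
  have := Finset.card_eq_sum_card_fiberwise (s := (univ : Finset (Fin n))) (f := f)
    (t := univ) (fun x _ => mem_univ _)
  simpa using this.symm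

lemma key_count (M : Fin n → Fin n → Bool) (g h : Fin n → Fin (r + 1)) (a b : Fin (r + 1)) :
    (Bv M g h a b false).card * (Bv M g h a b true).card ≤
      (Rs g a).card * (∑ j ∈ Rs h b, ∑ j' ∈ Rs h b, (DC M g a j j').card)
    + (Rs h b).card * (∑ i ∈ Rs g a, ∑ i' ∈ Rs g a, (DR M h b i i').card) := by
  classical
  set S := (Bv M g h a b false) ×ˢ (Bv M g h a b true) with hS
  have hsplit : (S.filter fun x => M x.1.1 x.2.2 = true).card
      + (S.filter fun x => ¬ (M x.1.1 x.2.2 = true)).card = S.card :=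
    card_filter_add_card_filter_not _
  have h1 : (S.filter fun x => M x.1.1 x.2.2 = true).card ≤
      (Rs g a).card * (∑ j ∈ Rs h b, ∑ j' ∈ Rs h b, (DC M g a j j').card) := by
    rw [Finset.card_eq_sum_card_fiberwise (f := fun x => (x.1.2, x.2.2))
      (t := (Rs h b) ×ˢ (Rs h b)) ?_]
    · rw [mul_sum]
      rw [Finset.sum_product]
      simp only [mul_sum]
      refine sum_le_sum fun j hj => sum_le_sum fun j' hj' => ?_
      have hle : ((S.filter fun x => M x.1.1 x.2.2 = true).filter
          fun x => (fun x => (x.1.2, x.2.2)) x = (j, j')).card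
          ≤ ((Rs g a) ×ˢ (DC M g a j j')).card := by
        apply Finset.card_le_card_of_injOn (fun x => (x.2.1, x.1.1))
        · intro x hx
          simp only [mem_coe, hS, Bv, mem_filter, mem_product, mem_univ, true_and, Prod.mk.injEq] at hx
          obtain ⟨⟨⟨⟨hga, hhb, hMf⟩, ⟨hga', hhb', hMt⟩⟩, hcorner⟩, hj1, hj2⟩ := hx
          simp only [mem_coe, Rs, DC, mem_product, mem_filter, mem_univ, true_and]
          refine ⟨hga', hga, ?_⟩
          rw [hj1] at hMf
          rw [hj2] at hcorner
          rw [hMf, hcorner]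
          simp
        · intro x hx y hy hxy
          simp only [mem_coe, mem_filter, Prod.mk.injEq] at hx hy
          simp only [Prod.mk.injEq] at hxy
          exact Prod.ext (Prod.ext hxy.2 (hx.2.1.trans hy.2.1.symm))
            (Prod.ext hxy.1 (hx.2.2.trans hy.2.2.symm))
      simpa [card_product] using hle
    · intro x hx
      simp only [mem_coe, hS, Bv, mem_filter, mem_product, mem_univ, true_and] at hx
      simp only [mem_coe, Rs, mem_product, mem_filter, mem_univ, true_and]
      exact ⟨hx.1.1.2.1, hx.1.2.2.1⟩
  have h2 : (S.filter fun x => ¬ (M x.1.1 x.2.2 = true)).card ≤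
      (Rs h b).card * (∑ i ∈ Rs g a, ∑ i' ∈ Rs g a, (DR M h b i i').card) := by
    rw [Finset.card_eq_sum_card_fiberwise (f := fun x => (x.1.1, x.2.1))
      (t := (Rs g a) ×ˢ (Rs g a)) ?_]
    · rw [mul_sum]
      rw [Finset.sum_product]
      simp only [mul_sum]
      refine sum_le_sum fun i hi => sum_le_sum fun i' hi' => ?_
      have hle : ((S.filter fun x => ¬ (M x.1.1 x.2.2 = true)).filter
          fun x => (fun x => (x.1.1, x.2.1)) x = (i, i')).card
          ≤ ((Rs h b) ×ˢ (DR M h b i i')).card := by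
        apply Finset.card_le_card_of_injOn (fun x => (x.1.2, x.2.2))
        · intro x hx
          simp only [mem_coe, hS, Bv, mem_filter, mem_product, mem_univ, true_and, Prod.mk.injEq] at hx
          obtain ⟨⟨⟨⟨hga, hhb, hMf⟩, ⟨hga', hhb', hMt⟩⟩, hcorner⟩, hi1, hi2⟩ := hx
          simp only [mem_coe, Rs, DR, mem_product, mem_filter, mem_univ, true_and]
          refine ⟨hhb, hhb', ?_⟩
          rw [Bool.not_eq_true] at hcorner
          rw [hi1] at hcorner
          rw [hi2] at hMt
          rw [hcorner, hMt]
          simp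
        · intro x hx y hy hxy
          simp only [mem_coe, mem_filter, Prod.mk.injEq] at hx hy
          simp only [Prod.mk.injEq] at hxy
          exact Prod.ext (Prod.ext (hx.2.1.trans hy.2.1.symm) hxy.1)
            (Prod.ext (hx.2.2.trans hy.2.2.symm) hxy.2)
      simpa [card_product] using hle
    · intro x hx
      simp only [mem_coe, hS, Bv, mem_filter, mem_product, mem_univ, true_and] at hx
      simp only [mem_coe, Rs, mem_product, mem_filter, mem_univ, true_and]
      exact ⟨hx.1.1.1, hx.1.2.1⟩
  calc (Bv M g h a b false).card * (Bv M g h a b true).card = S.card := (card_product _ _).symm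
    _ = _ + _ := hsplit.symm
    _ ≤ _ := Nat.add_le_add h1 h2

lemma homog_of_zero {δ : ℝ} (hδ1 : δ ≤ 1) (M : Fin n → Fin n → Bool)
    (g h : Fin n → Fin (r + 1)) (a b : Fin (r + 1))
    (h0 : (Rs g a).card = 0 ∨ (Rs h b).card = 0) :
    BlockHomog M δ g h a b := by
  refine ⟨true, ?_⟩
  have hz : ((univ.filter fun i : Fin n => g i = a).card : ℝ) *
      ((univ.filter fun j : Fin n => h j = b).card : ℝ) = 0 := by
    rcases h0 with h0 | h0 <;> simp [Rs] at h0 <;> simp [h0]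
  rw [hz, mul_zero]
  positivity

lemma card_split (M : Fin n → Fin n → Bool) (g h : Fin n → Fin (r + 1)) (a b : Fin (r + 1)) :
    (Bv M g h a b false).card + (Bv M g h a b true).card = (Rs g a).card * (Rs h b).card := by
  classical
  have h1 : (univ.filter fun p : Fin n × Fin n => g p.1 = a ∧ h p.2 = b) = Rs g a ×ˢ Rs h b := by
    ext p; simp [Rs, mem_product]
  have h2 := card_filter_add_card_filter_not
    (s := univ.filter fun p : Fin n × Fin n => g p.1 = a ∧ h p.2 = b)
    (p := fun p => M p.1 p.2 = false)
  rw [filter_filter, filter_filter] at h2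
  have e1 : (univ.filter fun p : Fin n × Fin n =>
      (g p.1 = a ∧ h p.2 = b) ∧ M p.1 p.2 = false) = Bv M g h a b false := by
    apply filter_congr; intro p _; tauto
  have e2 : (univ.filter fun p : Fin n × Fin n =>
      (g p.1 = a ∧ h p.2 = b) ∧ ¬ (M p.1 p.2 = false)) = Bv M g h a b true := by
    apply filter_congr; intro p _
    simp only [Bool.not_eq_false, Bv]
    tauto
  rw [e1, e2, h1, card_product] at h2
  exact h2

lemma block_bound {δ : ℝ} (hδ : 0 < δ) (hδ1 : δ < 1) (M : Fin n → Fin n → Bool)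
    (g h : Fin n → Fin (r + 1)) {a b : Fin (r + 1)}
    (hbad : ¬ BlockHomog M δ g h a b) :
    ((Rs g a).card : ℝ) * ((Rs h b).card : ℝ) ≤
      2 / δ * ((∑ j ∈ Rs h b, ∑ j' ∈ Rs h b, ((DC M g a j j').card : ℝ)) / ((Rs h b).card : ℝ)
        + (∑ i ∈ Rs g a, ∑ i' ∈ Rs g a, ((DR M h b i i').card : ℝ)) / ((Rs g a).card : ℝ)) := by
  classical
  have hp : 0 < (Rs g a).card := by
    rcases Nat.eq_zero_or_pos (Rs g a).card with h0 | h0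
    · exact absurd (homog_of_zero hδ1.le M g h a b (Or.inl h0)) hbad
    · exact h0
  have hq : 0 < (Rs h b).card := by
    rcases Nat.eq_zero_or_pos (Rs h b).card with h0 | h0
    · exact absurd (homog_of_zero hδ1.le M g h a b (Or.inr h0)) hbad
    · exact h0
  rw [BlockHomog] at hbad
  push_neg at hbad
  have hZ := hbad false
  have hO := hbad true
  set P : ℝ := ((Rs g a).card : ℝ) with hP
  set Q : ℝ := ((Rs h b).card : ℝ) with hQ
  set Z : ℝ := ((Bv M g h a b false).card : ℝ) with hZdef
  set O : ℝ := ((Bv M g h a b true).card : ℝ) with hOdef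
  have hPpos : (0:ℝ) < P := by rw [hP]; exact_mod_cast hp
  have hQpos : (0:ℝ) < Q := by rw [hQ]; exact_mod_cast hq
  have hZ' : Z < (1 - δ) * (P * Q) := by
    have : ((univ.filter fun p : Fin n × Fin n =>
        g p.1 = a ∧ h p.2 = b ∧ M p.1 p.2 = false).card : ℝ) = Z := rfl
    rw [← this]; exact hZ
  have hO' : O < (1 - δ) * (P * Q) := by
    have : ((univ.filter fun p : Fin n × Fin n =>
        g p.1 = a ∧ h p.2 = b ∧ M p.1 p.2 = true).card : ℝ) = O := rfl
    rw [← this]; exact hO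
  have hsum : Z + O = P * Q := by
    have := card_split M g h a b
    rw [hZdef, hOdef, hP, hQ]
    exact_mod_cast this
  set SC : ℝ := ∑ j ∈ Rs h b, ∑ j' ∈ Rs h b, ((DC M g a j j').card : ℝ) with hSC
  set SR : ℝ := ∑ i ∈ Rs g a, ∑ i' ∈ Rs g a, ((DR M h b i i').card : ℝ) with hSR
  have hkey : Z * O ≤ P * SC + Q * SR := by
    have := key_count M g h a b
    rw [hZdef, hOdef, hP, hQ, hSC, hSR]
    push_cast
    exact_mod_cast this
  have hZlb : δ * (P * Q) < Z := by linarith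
  have hOlb : δ * (P * Q) < O := by linarith
  have hquad : δ * (P * Q) * (P * Q) ≤ 2 * (Z * O) := by
    nlinarith [mul_nonneg (sub_nonneg.2 hZlb.le) (sub_nonneg.2 hOlb.le),
      mul_nonneg (mul_nonneg hδ.le (mul_nonneg hPpos.le hQpos.le))
        (by linarith : (0:ℝ) ≤ P * Q - 2 * (δ * (P * Q)))]
  have hrw : 2 / δ * (SC / Q + SR / P) = (2 * (P * SC + Q * SR)) / (δ * (Q * P)) := by
    field_simp
  rw [hrw, le_div_iff₀ (by positivity)]
  nlinarith [hquad, hkey]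

end ClusterProofAux

open ClusterProofAux in
theorem clustering_gives_partition {n r : ℕ} (hr : 0 < r) (δ : ℝ) (hδ : 0 < δ)
    (hδ1 : δ < 1) (M : Fin n → Fin n → Bool) (g h : Fin n → Fin (r + 1))
    (hg : IsRowClustering M (δ ^ 2 / 16) g) (hh : IsColClustering M (δ ^ 2 / 16) h) :
    (Set.ncard {p : Fin n × Fin n | ¬ BlockHomog M δ g h (g p.1) (h p.2)} : ℝ) ≤
      δ * (n : ℝ) ^ 2 := by
  classical
  obtain ⟨hg0, hgsim⟩ := hg
  obtain ⟨hh0, hhsim⟩ := hh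
  have hhsim' : ∀ b : Fin (r + 1), b ≠ 0 → ∀ j j' : Fin n, h j = b → h j' = b →
      ((univ.filter fun i : Fin n => M i j ≠ M i j').card : ℝ) ≤ δ ^ 2 / 16 * n := hhsim
  -- pass to Finset cardinalities
  have hT : {p : Fin n × Fin n | ¬ BlockHomog M δ g h (g p.1) (h p.2)} =
      ↑(univ.filter fun p : Fin n × Fin n => ¬ BlockHomog M δ g h (g p.1) (h p.2)) := by
    ext p; simp
  rw [hT, Set.ncard_coe_finset]
  set T := univ.filter fun p : Fin n × Fin n => ¬ BlockHomog M δ g h (g p.1) (h p.2) with hTdef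
  set E1 := univ.filter fun p : Fin n × Fin n => g p.1 = 0 with hE1def
  set E2 := univ.filter fun p : Fin n × Fin n => h p.2 = 0 with hE2def
  set U := univ.filter fun p : Fin n × Fin n =>
    ¬ BlockHomog M δ g h (g p.1) (h p.2) ∧ g p.1 ≠ 0 ∧ h p.2 ≠ 0 with hUdef
  have hTsub : T ⊆ E1 ∪ E2 ∪ U := by
    intro p hp
    simp only [hTdef, hE1def, hE2def, hUdef, mem_filter, mem_univ, true_and, mem_union] at hp ⊢
    tauto
  have hcards : (T.card : ℝ) ≤ (E1.card : ℝ) + (E2.card : ℝ) + (U.card : ℝ) := by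
    have h1 : T.card ≤ (E1 ∪ E2 ∪ U).card := card_le_card hTsub
    have h2 : (E1 ∪ E2 ∪ U).card ≤ E1.card + E2.card + U.card :=
      le_trans (card_union_le _ _) (Nat.add_le_add_right (card_union_le _ _) _)
    exact_mod_cast le_trans h1 h2
  -- error clusters
  have hE1 : (E1.card : ℝ) ≤ δ ^ 2 / 16 * n * n := by
    have he : E1 = (Rs g 0) ×ˢ (univ : Finset (Fin n)) := by
      ext p; simp [hE1def, Rs, mem_product]
    rw [he, card_product, card_univ, Fintype.card_fin]
    push_cast
    exact mul_le_mul_of_nonneg_right hg0 (Nat.cast_nonneg n)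
  have hE2 : (E2.card : ℝ) ≤ δ ^ 2 / 16 * n * n := by
    have he : E2 = (univ : Finset (Fin n)) ×ˢ (Rs h 0) := by
      ext p; simp [hE2def, Rs, mem_product]
    rw [he, card_product, card_univ, Fintype.card_fin]
    push_cast
    rw [mul_comm]
    exact mul_le_mul_of_nonneg_right hh0 (Nat.cast_nonneg n)
  -- the bad blocks
  set badP := univ.filter fun ab : Fin (r + 1) × Fin (r + 1) =>
    ¬ BlockHomog M δ g h ab.1 ab.2 ∧ ab.1 ≠ 0 ∧ ab.2 ≠ 0 with hbadP
  have hU : (U.card : ℝ) ≤ ∑ ab ∈ badP, ((Rs g ab.1).card : ℝ) * ((Rs h ab.2).card : ℝ) := by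
    have h1 : U.card = ∑ ab ∈ badP, (U.filter fun p => (g p.1, h p.2) = ab).card := by
      apply Finset.card_eq_sum_card_fiberwise
      intro p hp
      simp only [mem_coe, hUdef, mem_filter, mem_univ, true_and] at hp
      simp only [mem_coe, hbadP, mem_filter, mem_univ, true_and]
      exact hp
    rw [h1]
    push_cast
    refine sum_le_sum fun ab hab => ?_
    have hsub : (U.filter fun p => (g p.1, h p.2) = ab) ⊆ Rs g ab.1 ×ˢ Rs h ab.2 := by
      intro p hp
      simp only [mem_filter] at hp
      simp only [Rs, mem_product, mem_filter, mem_univ, true_and]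
      exact ⟨congrArg Prod.fst hp.2, congrArg Prod.snd hp.2⟩
    have := card_le_card hsub
    rw [card_product] at this
    exact_mod_cast this
  have hblocks : ∀ ab ∈ badP, ((Rs g ab.1).card : ℝ) * ((Rs h ab.2).card : ℝ) ≤
      2 / δ * ((∑ j ∈ Rs h ab.2, ∑ j' ∈ Rs h ab.2, ((DC M g ab.1 j j').card : ℝ))
          / ((Rs h ab.2).card : ℝ)
        + (∑ i ∈ Rs g ab.1, ∑ i' ∈ Rs g ab.1, ((DR M h ab.2 i i').card : ℝ))
          / ((Rs g ab.1).card : ℝ)) := by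
    intro ab hab
    simp only [hbadP, mem_filter, mem_univ, true_and] at hab
    exact block_bound hδ hδ1 M g h hab.1
  -- column part
  have hcol : ∑ ab ∈ badP, (∑ j ∈ Rs h ab.2, ∑ j' ∈ Rs h ab.2, ((DC M g ab.1 j j').card : ℝ))
      / ((Rs h ab.2).card : ℝ) ≤ δ ^ 2 / 16 * n * n := by
    set B := univ.filter fun b : Fin (r + 1) => (Rs h b).card ≠ 0 ∧ b ≠ 0 with hB
    have hsub : badP ⊆ univ ×ˢ B := by
      intro ab hab
      simp only [hbadP, mem_filter, mem_univ, true_and] at hab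
      simp only [hB, mem_product, mem_filter, mem_univ, true_and]
      refine ⟨?_, hab.2.2⟩
      intro h0
      exact hab.1 (homog_of_zero hδ1.le M g h ab.1 ab.2 (Or.inr h0))
    refine le_trans (sum_le_sum_of_subset_of_nonneg hsub fun ab _ _ =>
      div_nonneg (Finset.sum_nonneg fun x _ => Finset.sum_nonneg fun y _ =>
        Nat.cast_nonneg _) (Nat.cast_nonneg _)) ?_
    rw [Finset.sum_product, Finset.sum_comm]
    have hbnd : ∀ b ∈ B, (∑ a : Fin (r + 1),
        (∑ j ∈ Rs h b, ∑ j' ∈ Rs h b, ((DC M g a j j').card : ℝ)) / ((Rs h b).card : ℝ))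
        ≤ δ ^ 2 / 16 * n * ((Rs h b).card : ℝ) := by
      intro b hbB
      simp only [hB, mem_filter, mem_univ, true_and] at hbB
      obtain ⟨hq, hb0⟩ := hbB
      have hQpos : (0:ℝ) < ((Rs h b).card : ℝ) := by
        exact_mod_cast Nat.pos_of_ne_zero hq
      rw [← sum_div, div_le_iff₀ hQpos]
      have hnum : ∑ a : Fin (r + 1), ∑ j ∈ Rs h b, ∑ j' ∈ Rs h b, ((DC M g a j j').card : ℝ)
          ≤ δ ^ 2 / 16 * n * (((Rs h b).card : ℝ) * ((Rs h b).card : ℝ)) := by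
        rw [Finset.sum_comm]
        have hterm : ∀ j ∈ Rs h b,
            (∑ a : Fin (r + 1), ∑ j' ∈ Rs h b, ((DC M g a j j').card : ℝ))
            ≤ ((Rs h b).card : ℝ) * (δ ^ 2 / 16 * n) := by
          intro j hj
          rw [Finset.sum_comm]
          have hterm2 : ∀ j' ∈ Rs h b,
              (∑ a : Fin (r + 1), ((DC M g a j j').card : ℝ)) ≤ δ ^ 2 / 16 * n := by
            intro j' hj'
            have hsum : ∑ a : Fin (r + 1), ((DC M g a j j').card : ℝ)
                = ((univ.filter fun i : Fin n => M i j ≠ M i j').card : ℝ) := by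
              simp only [DC]
              exact_mod_cast sum_card_filter_eq g (fun i => M i j ≠ M i j')
            rw [hsum]
            simp only [Rs, mem_filter, mem_univ, true_and] at hj hj'
            exact hhsim' b hb0 j j' hj hj'
          calc ∑ j' ∈ Rs h b, ∑ a : Fin (r + 1), ((DC M g a j j').card : ℝ)
              ≤ ∑ j' ∈ Rs h b, δ ^ 2 / 16 * n := sum_le_sum hterm2
            _ = ((Rs h b).card : ℝ) * (δ ^ 2 / 16 * n) := by rw [sum_const, nsmul_eq_mul]
        calc ∑ j ∈ Rs h b, ∑ a : Fin (r + 1), ∑ j' ∈ Rs h b, ((DC M g a j j').card : ℝ)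
            ≤ ∑ j ∈ Rs h b, ((Rs h b).card : ℝ) * (δ ^ 2 / 16 * n) := sum_le_sum hterm
          _ = δ ^ 2 / 16 * n * (((Rs h b).card : ℝ) * ((Rs h b).card : ℝ)) := by
              rw [sum_const, nsmul_eq_mul]; ring
      calc ∑ a : Fin (r + 1), ∑ j ∈ Rs h b, ∑ j' ∈ Rs h b, ((DC M g a j j').card : ℝ)
          ≤ δ ^ 2 / 16 * n * (((Rs h b).card : ℝ) * ((Rs h b).card : ℝ)) := hnum
        _ = δ ^ 2 / 16 * n * ((Rs h b).card : ℝ) * ((Rs h b).card : ℝ) := by ring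
    calc ∑ b ∈ B, (∑ a : Fin (r + 1),
          (∑ j ∈ Rs h b, ∑ j' ∈ Rs h b, ((DC M g a j j').card : ℝ)) / ((Rs h b).card : ℝ))
        ≤ ∑ b ∈ B, δ ^ 2 / 16 * n * ((Rs h b).card : ℝ) := sum_le_sum hbnd
      _ ≤ ∑ b : Fin (r + 1), δ ^ 2 / 16 * n * ((Rs h b).card : ℝ) :=
          sum_le_sum_of_subset_of_nonneg (subset_univ _) (fun b _ _ => by positivity)
      _ = δ ^ 2 / 16 * n * (∑ b : Fin (r + 1), ((Rs h b).card : ℝ)) := by rw [mul_sum]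
      _ = δ ^ 2 / 16 * n * n := by
          have hfib : ∑ b : Fin (r + 1), ((Rs h b).card : ℝ) = (n : ℝ) := by
            simp only [Rs]
            exact_mod_cast sum_card_fiber h
          rw [hfib]
  -- row part
  have hrow : ∑ ab ∈ badP, (∑ i ∈ Rs g ab.1, ∑ i' ∈ Rs g ab.1, ((DR M h ab.2 i i').card : ℝ))
      / ((Rs g ab.1).card : ℝ) ≤ δ ^ 2 / 16 * n * n := by
    set A := univ.filter fun a : Fin (r + 1) => (Rs g a).card ≠ 0 ∧ a ≠ 0 with hA
    have hsub : badP ⊆ A ×ˢ univ := by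
      intro ab hab
      simp only [hbadP, mem_filter, mem_univ, true_and] at hab
      simp only [hA, mem_product, mem_filter, mem_univ, true_and, and_true]
      refine ⟨?_, hab.2.1⟩
      intro h0
      exact hab.1 (homog_of_zero hδ1.le M g h ab.1 ab.2 (Or.inl h0))
    refine le_trans (sum_le_sum_of_subset_of_nonneg hsub fun ab _ _ =>
      div_nonneg (Finset.sum_nonneg fun x _ => Finset.sum_nonneg fun y _ =>
        Nat.cast_nonneg _) (Nat.cast_nonneg _)) ?_
    rw [Finset.sum_product]
    have hbnd : ∀ a ∈ A, (∑ b : Fin (r + 1),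
        (∑ i ∈ Rs g a, ∑ i' ∈ Rs g a, ((DR M h b i i').card : ℝ)) / ((Rs g a).card : ℝ))
        ≤ δ ^ 2 / 16 * n * ((Rs g a).card : ℝ) := by
      intro a haA
      simp only [hA, mem_filter, mem_univ, true_and] at haA
      obtain ⟨hp, ha0⟩ := haA
      have hPpos : (0:ℝ) < ((Rs g a).card : ℝ) := by
        exact_mod_cast Nat.pos_of_ne_zero hp
      rw [← sum_div, div_le_iff₀ hPpos]
      have hnum : ∑ b : Fin (r + 1), ∑ i ∈ Rs g a, ∑ i' ∈ Rs g a, ((DR M h b i i').card : ℝ)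
          ≤ δ ^ 2 / 16 * n * (((Rs g a).card : ℝ) * ((Rs g a).card : ℝ)) := by
        rw [Finset.sum_comm]
        have hterm : ∀ i ∈ Rs g a,
            (∑ b : Fin (r + 1), ∑ i' ∈ Rs g a, ((DR M h b i i').card : ℝ))
            ≤ ((Rs g a).card : ℝ) * (δ ^ 2 / 16 * n) := by
          intro i hi
          rw [Finset.sum_comm]
          have hterm2 : ∀ i' ∈ Rs g a,
              (∑ b : Fin (r + 1), ((DR M h b i i').card : ℝ)) ≤ δ ^ 2 / 16 * n := by
            intro i' hi'
            have hsum : ∑ b : Fin (r + 1), ((DR M h b i i').card : ℝ)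
                = ((univ.filter fun j : Fin n => M i j ≠ M i' j).card : ℝ) := by
              simp only [DR]
              exact_mod_cast sum_card_filter_eq h (fun j => M i j ≠ M i' j)
            rw [hsum]
            simp only [Rs, mem_filter, mem_univ, true_and] at hi hi'
            exact hgsim a ha0 i i' hi hi'
          calc ∑ i' ∈ Rs g a, ∑ b : Fin (r + 1), ((DR M h b i i').card : ℝ)
              ≤ ∑ i' ∈ Rs g a, δ ^ 2 / 16 * n := sum_le_sum hterm2
            _ = ((Rs g a).card : ℝ) * (δ ^ 2 / 16 * n) := by rw [sum_const, nsmul_eq_mul]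
        calc ∑ i ∈ Rs g a, ∑ b : Fin (r + 1), ∑ i' ∈ Rs g a, ((DR M h b i i').card : ℝ)
            ≤ ∑ i ∈ Rs g a, ((Rs g a).card : ℝ) * (δ ^ 2 / 16 * n) := sum_le_sum hterm
          _ = δ ^ 2 / 16 * n * (((Rs g a).card : ℝ) * ((Rs g a).card : ℝ)) := by
              rw [sum_const, nsmul_eq_mul]; ring
      calc ∑ b : Fin (r + 1), ∑ i ∈ Rs g a, ∑ i' ∈ Rs g a, ((DR M h b i i').card : ℝ)
          ≤ δ ^ 2 / 16 * n * (((Rs g a).card : ℝ) * ((Rs g a).card : ℝ)) := hnum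
        _ = δ ^ 2 / 16 * n * ((Rs g a).card : ℝ) * ((Rs g a).card : ℝ) := by ring
    calc ∑ a ∈ A, (∑ b : Fin (r + 1),
          (∑ i ∈ Rs g a, ∑ i' ∈ Rs g a, ((DR M h b i i').card : ℝ)) / ((Rs g a).card : ℝ))
        ≤ ∑ a ∈ A, δ ^ 2 / 16 * n * ((Rs g a).card : ℝ) := sum_le_sum hbnd
      _ ≤ ∑ a : Fin (r + 1), δ ^ 2 / 16 * n * ((Rs g a).card : ℝ) :=
          sum_le_sum_of_subset_of_nonneg (subset_univ _) (fun a _ _ => by positivity)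
      _ = δ ^ 2 / 16 * n * (∑ a : Fin (r + 1), ((Rs g a).card : ℝ)) := by rw [mul_sum]
      _ = δ ^ 2 / 16 * n * n := by
          have hfib : ∑ a : Fin (r + 1), ((Rs g a).card : ℝ) = (n : ℝ) := by
            simp only [Rs]
            exact_mod_cast sum_card_fiber g
          rw [hfib]
  -- put it together
  have hUbound : (U.card : ℝ) ≤ 2 / δ * (δ ^ 2 / 16 * n * n + δ ^ 2 / 16 * n * n) := by
    calc (U.card : ℝ) ≤ ∑ ab ∈ badP, ((Rs g ab.1).card : ℝ) * ((Rs h ab.2).card : ℝ) := hU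
      _ ≤ ∑ ab ∈ badP, 2 / δ *
          ((∑ j ∈ Rs h ab.2, ∑ j' ∈ Rs h ab.2, ((DC M g ab.1 j j').card : ℝ))
            / ((Rs h ab.2).card : ℝ)
          + (∑ i ∈ Rs g ab.1, ∑ i' ∈ Rs g ab.1, ((DR M h ab.2 i i').card : ℝ))
            / ((Rs g ab.1).card : ℝ)) := sum_le_sum hblocks
      _ = 2 / δ * ((∑ ab ∈ badP,
            (∑ j ∈ Rs h ab.2, ∑ j' ∈ Rs h ab.2, ((DC M g ab.1 j j').card : ℝ))
              / ((Rs h ab.2).card : ℝ))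
          + (∑ ab ∈ badP,
            (∑ i ∈ Rs g ab.1, ∑ i' ∈ Rs g ab.1, ((DR M h ab.2 i i').card : ℝ))
              / ((Rs g ab.1).card : ℝ))) := by
          rw [← mul_sum, sum_add_distrib]
      _ ≤ 2 / δ * (δ ^ 2 / 16 * n * n + δ ^ 2 / 16 * n * n) := by
          apply mul_le_mul_of_nonneg_left (add_le_add hcol hrow) (by positivity)
  have hfrac : 2 / δ * (δ ^ 2 / 16 * n * n + δ ^ 2 / 16 * n * n) = δ / 4 * (n * n) := by
    field_simp
    ring
  have hnn : (0:ℝ) ≤ (n : ℝ) * (n : ℝ) := by positivity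
  have hfinal : (T.card : ℝ) ≤ δ ^ 2 / 16 * n * n + δ ^ 2 / 16 * n * n + δ / 4 * (n * n) := by
    rw [← hfrac]
    linarith [hcards, hE1, hE2, hUbound]
  calc (T.card : ℝ) ≤ δ ^ 2 / 16 * n * n + δ ^ 2 / 16 * n * n + δ / 4 * (n * n) := hfinal
    _ ≤ δ * (n : ℝ) ^ 2 := by
        nlinarith [mul_nonneg (mul_nonneg hδ.le hnn) (sub_nonneg.2 hδ1.le),
          mul_nonneg hδ.le hnn]
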